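/- Let M be a maximum matching of G and let F be an M-flower with stem endpoint u (the M-unmatched vertex) and blossom B with base b. Then the symmetric difference of M with the edge set of the stem is again a maximum matching M' of G, M' leaves b unmatched by edges of the stem path, and B remains an M'-blossom whose base b is M'-unmatched, so G contains an M'-flower with trivial stem. -/

import Mathlib

open SimpleGraph

variable {V : Type*} [DecidableEq V]

/-- `M` is a matching of `G`: a set of edges of `G`, pairwise not sharing a vertex. -/
def IsMatching' (G : SimpleGraph V) (M : Finset (Sym2 V)) : Prop :=
  (↑M : Set (Sym2 V)) ⊆ G.edgeSet ∧
    ∀ e ∈ M, ∀ f ∈ M, e ≠ f → ∀ v : V, ¬(v ∈ e ∧ v ∈ f)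

/-- `M` is a maximum matching of `G`. -/
def IsMaxMatching (G : SimpleGraph V) (M : Finset (Sym2 V)) : Prop :=
  IsMatching' G M ∧ ∀ M' : Finset (Sym2 V), IsMatching' G M' → M'.card ≤ M.card

/-- The vertex `v` is matched (saturated) by `M`. -/
def MatchedBy (M : Finset (Sym2 V)) (v : V) : Prop :=
  ∃ e ∈ M, v ∈ e

/-- A walk is `M`-alternating: consecutive edges alternate between `M` and its complement. -/
def IsAltWalk {G : SimpleGraph V} (M : Finset (Sym2 V)) {u v : V} (w : G.Walk u v) : Prop :=
  w.edges.Chain' (fun e f => e ∈ M ↔ f ∉ M)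

/-- The first edge of the walk belongs to `M`. -/
def StartsMatched {G : SimpleGraph V} (M : Finset (Sym2 V)) {u v : V} (w : G.Walk u v) : Prop :=
  ∃ e, w.edges.head? = some e ∧ e ∈ M

/-- The last edge of the walk belongs to `M`. -/
def EndsMatched {G : SimpleGraph V} (M : Finset (Sym2 V)) {u v : V} (w : G.Walk u v) : Prop :=
  ∃ e, w.edges.getLast? = some e ∧ e ∈ M

/-- The first edge of the walk does not belong to `M`. -/
def StartsUnmatched {G : SimpleGraph V} (M : Finset (Sym2 V)) {u v : V} (w : G.Walk u v) : Prop :=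
  ∃ e, w.edges.head? = some e ∧ e ∉ M

/-- The last edge of the walk does not belong to `M`. -/
def EndsUnmatched {G : SimpleGraph V} (M : Finset (Sym2 V)) {u v : V} (w : G.Walk u v) : Prop :=
  ∃ e, w.edges.getLast? = some e ∧ e ∉ M

/-- An `M`-blossom with base `b`: an odd cycle of length `2k+1` containing exactly `k`
edges of `M`, alternating, whose base `b` is not matched within the cycle. -/
def IsBlossom (G : SimpleGraph V) (M : Finset (Sym2 V)) {b : V} (c : G.Walk b b) : Prop :=
  c.IsCycle ∧ Odd c.length ∧ IsAltWalk M c ∧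
    2 * (c.edges.toFinset ∩ M).card + 1 = c.length ∧
    ∀ e ∈ c.edges, e ∈ M → b ∉ e

/-- An `M`-flower: an `M`-blossom with base `b` together with an even `M`-alternating
stem from `b` to an `M`-unmatched vertex `u`, sharing only the base with the blossom. -/
def IsFlower (G : SimpleGraph V) (M : Finset (Sym2 V)) {b u : V}
    (c : G.Walk b b) (s : G.Walk b u) : Prop :=
  IsBlossom G M c ∧ s.IsPath ∧ Even s.length ∧ IsAltWalk M s ∧
    ¬ MatchedBy M u ∧ ∀ x ∈ s.support, x ∈ c.support → x = b

/-- An `M`-posy: two distinct `M`-blossoms joined by an odd `M`-alternating path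
between their bases, starting and ending with matched edges. -/
def IsPosy (G : SimpleGraph V) (M : Finset (Sym2 V)) {b₁ b₂ : V}
    (c₁ : G.Walk b₁ b₁) (c₂ : G.Walk b₂ b₂) (p : G.Walk b₁ b₂) : Prop :=
  IsBlossom G M c₁ ∧ IsBlossom G M c₂ ∧ (b₁ ≠ b₂ ∨ c₁.edges ≠ c₂.edges) ∧
    p.IsPath ∧ Odd p.length ∧ IsAltWalk M p ∧ StartsMatched M p ∧ EndsMatched M p

/-- An `M`-Tposy: a posy whose connecting path is internally disjoint from both blossoms. -/
def IsTposy (G : SimpleGraph V) (M : Finset (Sym2 V)) {b₁ b₂ : V}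
    (c₁ : G.Walk b₁ b₁) (c₂ : G.Walk b₂ b₂) (p : G.Walk b₁ b₂) : Prop :=
  IsPosy G M c₁ c₂ p ∧
    ∀ x ∈ p.support, x ≠ b₁ → x ≠ b₂ → x ∉ c₁.support ∧ x ∉ c₂.support

/-- An `M`-Jposy: two (not necessarily distinct) `M`-blossoms joined by an odd
`M`-alternating walk between their bases, starting and ending with matched edges. -/
def IsJposy (G : SimpleGraph V) (M : Finset (Sym2 V)) {b₁ b₂ : V}
    (c₁ : G.Walk b₁ b₁) (c₂ : G.Walk b₂ b₂) (w : G.Walk b₁ b₂) : Prop :=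
  IsBlossom G M c₁ ∧ IsBlossom G M c₂ ∧
    Odd w.length ∧ IsAltWalk M w ∧ StartsMatched M w ∧ EndsMatched M w

/-- An `M`-Jflower: an `M`-blossom together with an `M`-alternating walk from its base
to an `M`-unmatched vertex. -/
def IsJflower (G : SimpleGraph V) (M : Finset (Sym2 V)) {b u : V}
    (c : G.Walk b b) (w : G.Walk b u) : Prop :=
  IsBlossom G M c ∧ IsAltWalk M w ∧ ¬ MatchedBy M u

/-- The vertex `x` belongs to some `M`-flower. -/
def InFlower (G : SimpleGraph V) (M : Finset (Sym2 V)) (x : V) : Prop :=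
  ∃ (b u : V) (c : G.Walk b b) (s : G.Walk b u),
    IsFlower G M c s ∧ (x ∈ c.support ∨ x ∈ s.support)

/-- The vertex `x` belongs to some `M`-posy. -/
def InPosy (G : SimpleGraph V) (M : Finset (Sym2 V)) (x : V) : Prop :=
  ∃ (b₁ b₂ : V) (c₁ : G.Walk b₁ b₁) (c₂ : G.Walk b₂ b₂) (p : G.Walk b₁ b₂),
    IsPosy G M c₁ c₂ p ∧ (x ∈ c₁.support ∨ x ∈ c₂.support ∨ x ∈ p.support)

/-- The vertex `x` belongs to some `M`-Tposy. -/
def InTposy (G : SimpleGraph V) (M : Finset (Sym2 V)) (x : V) : Prop :=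
  ∃ (b₁ b₂ : V) (c₁ : G.Walk b₁ b₁) (c₂ : G.Walk b₂ b₂) (p : G.Walk b₁ b₂),
    IsTposy G M c₁ c₂ p ∧ (x ∈ c₁.support ∨ x ∈ c₂.support ∨ x ∈ p.support)

/-- The vertex `x` belongs to some `M`-Jposy. -/
def InJposy (G : SimpleGraph V) (M : Finset (Sym2 V)) (x : V) : Prop :=
  ∃ (b₁ b₂ : V) (c₁ : G.Walk b₁ b₁) (c₂ : G.Walk b₂ b₂) (w : G.Walk b₁ b₂),
    IsJposy G M c₁ c₂ w ∧ (x ∈ c₁.support ∨ x ∈ c₂.support ∨ x ∈ w.support)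

/-- The vertex `x` belongs to some `M`-Jflower. -/
def InJflower (G : SimpleGraph V) (M : Finset (Sym2 V)) (x : V) : Prop :=
  ∃ (b u : V) (c : G.Walk b b) (w : G.Walk b u),
    IsJflower G M c w ∧ (x ∈ c.support ∨ x ∈ w.support)

/-- The independence number of `G`. -/
noncomputable def indepNum (G : SimpleGraph V) : ℕ :=
  sSup {n | ∃ s : Finset V, (∀ u ∈ s, ∀ w ∈ s, ¬ G.Adj u w) ∧ s.card = n}

/-- The matching number of `G`. -/
noncomputable def matchNum (G : SimpleGraph V) : ℕ :=
  sSup {n | ∃ M : Finset (Sym2 V), IsMatching' G M ∧ M.card = n}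

/-- `G` is a König–Egerváry graph: `α(G) + μ(G) = |V(G)|`. -/
def IsKE (G : SimpleGraph V) [Fintype V] : Prop :=
  _root_.indepNum G + matchNum G = Fintype.card V

section Helpers

variable {G : SimpleGraph V} {M : Finset (Sym2 V)}

private lemma mem_support_of_mem_edge {b u : V} (s : G.Walk b u) {e : Sym2 V}
    (he : e ∈ s.edges) {v : V} (hv : v ∈ e) : v ∈ s.support := by
  induction e with
  | _ x y =>
    rcases Sym2.mem_iff.mp hv with rfl | rfl
    · exact s.fst_mem_support_of_mem_edges he
    · exact s.snd_mem_support_of_mem_edges he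

private lemma start_mem_firstEdge {b u : V} (s : G.Walk b u) {e : Sym2 V}
    (he : s.edges.head? = some e) : b ∈ e := by
  cases s with
  | nil => simp at he
  | cons h t =>
    simp only [SimpleGraph.Walk.edges_cons, List.head?_cons, Option.some.injEq] at he
    subst he; simp

private lemma end_mem_lastEdge {b u : V} (s : G.Walk b u) {e : Sym2 V}
    (he : s.edges.getLast? = some e) : u ∈ e := by
  apply start_mem_firstEdge s.reverse
  rw [SimpleGraph.Walk.edges_reverse, List.head?_reverse]
  exact he

private lemma edge_at_start : ∀ {b u : V} (s : G.Walk b u), s.IsPath →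
    ∀ {e : Sym2 V}, e ∈ s.edges → b ∈ e → s.edges.head? = some e := by
  intro b u s hp e he hbe
  cases s with
  | nil => simp at he
  | cons h t =>
    rw [SimpleGraph.Walk.cons_isPath_iff] at hp
    simp only [SimpleGraph.Walk.edges_cons] at he ⊢
    rcases List.mem_cons.mp he with rfl | het
    · rfl
    · exact absurd (mem_support_of_mem_edge t het hbe) hp.2

/-- L1: every vertex of an alternating walk other than the endpoint is either the start
or is covered by a matched edge of the walk. -/
private lemma matched_in_stem : ∀ {b u : V} (s : G.Walk b u), IsAltWalk M s →
    ∀ v ∈ s.support, v ≠ u → (∃ g ∈ s.edges, g ∈ M ∧ v ∈ g) ∨ v = b := by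
  intro b u s
  induction s with
  | nil =>
    intro _ v hv hvu
    simp only [SimpleGraph.Walk.support_nil, List.mem_singleton] at hv
    exact absurd hv hvu
  | @cons a x u h t ih =>
    intro halt v hv hvu
    unfold IsAltWalk at halt
    simp only [SimpleGraph.Walk.support_cons, List.mem_cons] at hv
    rcases hv with rfl | hv
    · exact Or.inr rfl
    · have htalt : IsAltWalk M t := by
        unfold IsAltWalk
        simpa only [SimpleGraph.Walk.edges_cons, List.tail_cons, List.Chain'] using halt.tail
      rcases ih htalt v hv hvu with ⟨g, hg, hgM, hvg⟩ | rfl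
      · exact Or.inl ⟨g, by simp [hg], hgM, hvg⟩
      · by_cases hM0 : s(a, v) ∈ M
        · exact Or.inl ⟨s(a, v), by simp, hM0, by simp⟩
        · cases t with
          | nil => exact absurd rfl hvu
          | @cons x y u h2 t2 =>
            have hpair := (List.isChain_cons_cons.mp (by
              simpa only [SimpleGraph.Walk.edges_cons, List.Chain'] using halt)).1
            have : s(v, y) ∈ M := by
              by_contra hc
              exact hM0 (hpair.mpr hc)
            exact Or.inl ⟨s(v, y), by simp, this, by simp⟩

/-- L2: two distinct edges of an alternating path sharing a vertex cannot both be
unmatched. -/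
private lemma shared_vertex_matched : ∀ {b u : V} (s : G.Walk b u), s.IsPath →
    IsAltWalk M s → ∀ e ∈ s.edges, ∀ f ∈ s.edges, e ≠ f → ∀ v, v ∈ e → v ∈ f →
    e ∈ M ∨ f ∈ M := by
  intro b u s
  induction s with
  | nil => intro _ _ e he; simp at he
  | @cons a x u h t ih =>
    intro hp halt e he f hf hef v hve hvf
    rw [SimpleGraph.Walk.cons_isPath_iff] at hp
    have htalt : IsAltWalk M t := by
      unfold IsAltWalk at halt ⊢
      simpa only [SimpleGraph.Walk.edges_cons, List.tail_cons, List.Chain'] using halt.tail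
    simp only [SimpleGraph.Walk.edges_cons, List.mem_cons] at he hf
    have key : ∀ e' f' : Sym2 V, e' = s(a, x) → f' ∈ t.edges → ∀ w, w ∈ e' → w ∈ f' →
        e' ∈ M ∨ f' ∈ M := by
      intro e' f' he' hf' w hwe hwf
      subst he'
      have hwsup : w ∈ t.support := mem_support_of_mem_edge t hf' hwf
      have hwx : w = x := by
        rcases Sym2.mem_iff.mp hwe with rfl | rfl
        · exact absurd hwsup hp.2
        · rfl
      subst hwx
      have hhead : t.edges.head? = some f' := edge_at_start t hp.1 hf' hwf
      cases ht : t.edges with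
      | nil => rw [ht] at hhead; simp at hhead
      | cons g l =>
        rw [ht] at hhead
        simp only [List.head?_cons, Option.some.injEq] at hhead
        subst hhead
        have hpair := (List.isChain_cons_cons.mp (by
          unfold IsAltWalk at halt
          rw [SimpleGraph.Walk.edges_cons, ht] at halt
          exact halt)).1
        by_cases hM0 : s(a, w) ∈ M
        · exact Or.inl hM0
        · exact Or.inr (by by_contra hc; exact hM0 (hpair.mpr hc))
    rcases he with rfl | het <;> rcases hf with rfl | hft
    · exact absurd rfl hef
    · exact key _ f rfl hft v hve hvf
    · exact (key _ e rfl het v hvf hve).symm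
    · exact ih hp.1 htalt e het f hft hef v hve hvf

/-- Parity: in a nonempty alternating list whose last element is unmatched, the head is
matched iff the length is even. -/
private lemma head_iff_even : ∀ (l : List (Sym2 V)), l ≠ [] →
    l.Chain' (fun e f => e ∈ M ↔ f ∉ M) →
    (∀ e, l.getLast? = some e → e ∉ M) →
    ∀ e, l.head? = some e → (e ∈ M ↔ Even l.length)
  | [], h => absurd rfl h
  | [e], _ => by
    intro _ hlast f hf
    simp only [List.head?_cons, Option.some.injEq] at hf
    subst hf
    have := hlast e (by simp)
    simp [this]
  | e :: f :: t, _ => by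
    intro hchain hlast g hg
    simp only [List.head?_cons, Option.some.injEq] at hg
    subst hg
    have hpair := (List.isChain_cons_cons.mp hchain).1
    have ihf := head_iff_even (f :: t) (by simp) (List.isChain_cons_cons.mp hchain).2
      (fun e' he' => hlast e' (by rw [List.getLast?_cons_cons]; exact he')) f rfl
    constructor
    · intro hgM
      have : f ∉ M := hpair.mp hgM
      have : ¬ Even (f :: t).length := fun h => this (ihf.mpr h)
      simpa [Nat.even_add_one] using this
    · intro hev
      have : ¬ Even (f :: t).length := by
        simp only [List.length_cons] at hev ⊢
        simpa [Nat.even_add_one] using hev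
      have hfM : f ∉ M := fun h => this (ihf.mp h)
      exact hpair.mpr hfM

/-- L4: counting matched edges in an alternating nodup list starting matched. -/
private lemma count_alt : ∀ (l : List (Sym2 V)), l.Nodup →
    l.Chain' (fun e f => e ∈ M ↔ f ∉ M) →
    (∀ e, l.head? = some e → e ∈ M) →
    2 * (l.toFinset ∩ M).card = l.length + l.length % 2
  | [] => by intro _ _ _; simp
  | [e] => by
    intro _ _ hhead
    have heM : e ∈ M := hhead e rfl
    simp [Finset.singleton_inter_of_mem heM]
  | e :: f :: t => by
    intro hnodup hchain hhead
    have heM : e ∈ M := hhead e rfl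
    have hpair := (List.isChain_cons_cons.mp hchain).1
    have hfM : f ∉ M := hpair.mp heM
    have hchain' : (f :: t).Chain' _ := (List.isChain_cons_cons.mp hchain).2
    have hthead : ∀ g, t.head? = some g → g ∈ M := by
      intro g hg
      cases t with
      | nil => simp at hg
      | cons g' t' =>
        simp only [List.head?_cons, Option.some.injEq] at hg
        subst hg
        have hpair2 := (List.isChain_cons_cons.mp hchain').1
        by_contra hc
        exact hfM (hpair2.mpr hc)
    have ih := count_alt t (hnodup.of_cons.of_cons) (hchain'.tail) hthead
    have h1 : (e :: f :: t).toFinset ∩ M = insert e (t.toFinset ∩ M) := by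
      ext g
      simp only [List.toFinset_cons, Finset.mem_inter, Finset.mem_insert, List.mem_toFinset]
      constructor
      · rintro ⟨rfl | rfl | hg, hgM⟩
        · exact Or.inl rfl
        · exact absurd hgM hfM
        · exact Or.inr ⟨by simpa using hg, hgM⟩
      · rintro (rfl | ⟨hg, hgM⟩)
        · exact ⟨Or.inl rfl, heM⟩
        · exact ⟨Or.inr (Or.inr (by simpa using hg)), hgM⟩
    have hnot : e ∉ t.toFinset ∩ M := by
      intro hc
      have := List.mem_toFinset.mp (Finset.mem_inter.mp hc).1
      simp [this] at hnodup
    rw [h1, Finset.card_insert_of_notMem hnot]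
    simp only [List.length_cons]
    omega

/-- Transfer of the alternating property under agreement of membership. -/
private lemma chain'_alt_congr {M' : Finset (Sym2 V)} : ∀ (l : List (Sym2 V)),
    (∀ e ∈ l, (e ∈ M ↔ e ∈ M')) →
    l.Chain' (fun e f => e ∈ M ↔ f ∉ M) →
    l.Chain' (fun e f => e ∈ M' ↔ f ∉ M')
  | [] => by intro _ _; exact List.isChain_nil
  | [e] => by intro _ _; exact List.isChain_singleton _
  | e :: f :: t => by
    intro hagree hchain
    have hpair := (List.isChain_cons_cons.mp hchain).1
    refine List.isChain_cons_cons.mpr ⟨?_, chain'_alt_congr (f :: t)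
      (fun g hg => hagree g (List.mem_cons_of_mem e hg)) (List.isChain_cons_cons.mp hchain).2⟩
    have he := hagree e (by simp)
    have hf := hagree f (by simp)
    constructor
    · intro h; exact fun hf' => (hpair.mp (he.mpr h)) (hf.mpr hf')
    · intro h
      exact he.mp (hpair.mpr (fun hf' => h (hf.mp hf')))

end Helpers

/-- Flipping a maximum matching along the stem of an `M`-flower yields a
maximum matching `M'` which leaves the base `b` unmatched (in particular by stem
edges), and the blossom remains an `M'`-blossom; hence `G` has an `M'`-flower with
trivial stem. -/
theorem stmt_17 {V : Type*} [DecidableEq V] (G : SimpleGraph V) (M : Finset (Sym2 V))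
    (hM : IsMaxMatching G M) {b u : V} (c : G.Walk b b) (s : G.Walk b u)
    (hF : IsFlower G M c s) :
    IsMaxMatching G (symmDiff M s.edges.toFinset) ∧
    (∀ e ∈ symmDiff M s.edges.toFinset, e ∈ s.edges → b ∉ e) ∧
    IsBlossom G (symmDiff M s.edges.toFinset) c ∧
    (∀ e ∈ symmDiff M s.edges.toFinset, b ∉ e) := by
  obtain ⟨⟨hcCyc, hcOdd, hcAlt, hcCount, hcBase⟩, hsPath, hsEven, hsAlt, hu, hshare⟩ := hF
  set S := s.edges.toFinset with hS
  have hnodup : s.edges.Nodup := hsPath.isTrail.edges_nodup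
  have hlast : ∀ e, s.edges.getLast? = some e → e ∉ M :=
    fun e he hm => hu ⟨e, hm, end_mem_lastEdge s he⟩
  have hhead : ∀ e, s.edges.head? = some e → e ∈ M := by
    intro e he
    have hne : s.edges ≠ [] := by intro h; rw [h] at he; simp at he
    exact (head_iff_even s.edges hne hsAlt hlast e he).mpr
      (by rw [s.length_edges]; exact hsEven)
  -- b is unmatched by the new matching
  have hb4 : ∀ e ∈ symmDiff M S, b ∉ e := by
    intro e he hbe
    rcases Finset.mem_symmDiff.mp he with ⟨heM, heS⟩ | ⟨heS, heM⟩
    · rcases hE : s.edges with _ | ⟨e0, l⟩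
      · have hb_u : b = u := SimpleGraph.Walk.eq_of_length_eq_zero
          (by rw [← s.length_edges, hE]; rfl)
        exact hu ⟨e, heM, hb_u ▸ hbe⟩
      · have hh : s.edges.head? = some e0 := by rw [hE]; rfl
        have he0M := hhead e0 hh
        have hbe0 : b ∈ e0 := start_mem_firstEdge s hh
        have hne : e ≠ e0 := by
          rintro rfl
          exact heS (List.mem_toFinset.mpr (by rw [hE]; simp))
        exact hM.1.2 e heM e0 he0M hne b ⟨hbe, hbe0⟩
    · have hes : e ∈ s.edges := List.mem_toFinset.mp heS
      exact heM (hhead e (edge_at_start s hsPath hes hbe))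
  -- cardinality computation
  have hScard : S.card = s.length := by
    rw [hS, List.toFinset_card_of_nodup hnodup, s.length_edges]
  have hcount : 2 * (S ∩ M).card = s.length := by
    have hca := count_alt s.edges hnodup hsAlt hhead
    rw [s.length_edges, ← hS] at hca
    have h0 : s.length % 2 = 0 := Nat.even_iff.mp hsEven
    omega
  have hcard : (symmDiff M S).card = M.card := by
    rw [symmDiff_def, Finset.sup_eq_union,
      Finset.card_union_of_disjoint disjoint_sdiff_sdiff]
    have h1 : (M \ S).card = M.card - (M ∩ S).card := by
      rw [← Finset.sdiff_inter_self_left M S, Finset.card_sdiff_of_subset Finset.inter_subset_left]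
    have h2 : (S \ M).card = S.card - (S ∩ M).card := by
      rw [← Finset.sdiff_inter_self_left S M, Finset.card_sdiff_of_subset Finset.inter_subset_left]
    have h3 : (M ∩ S).card = (S ∩ M).card := by rw [Finset.inter_comm]
    have h4 : (M ∩ S).card ≤ M.card := Finset.card_le_card Finset.inter_subset_left
    have h5 : (S ∩ M).card ≤ S.card := Finset.card_le_card Finset.inter_subset_left
    omega
  -- the new edge set is a matching
  have hmatch : IsMatching' G (symmDiff M S) := by
    constructor
    · intro e he
      rcases Finset.mem_symmDiff.mp he with ⟨heM, _⟩ | ⟨heS, _⟩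
      · exact hM.1.1 heM
      · exact s.edges_subset_edgeSet (List.mem_toFinset.mp heS)
    · rintro e he f hf hef v ⟨hve, hvf⟩
      have key : ∀ e f : Sym2 V, e ∈ M → e ∉ S → f ∈ S → f ∉ M →
          ∀ w : V, w ∈ e → w ∈ f → False := by
        intro e f heM heS hfS hfM w hwe hwf
        have hfs : f ∈ s.edges := List.mem_toFinset.mp hfS
        have hwsup : w ∈ s.support := mem_support_of_mem_edge s hfs hwf
        by_cases hwu : w = u
        · exact hu ⟨e, heM, hwu ▸ hwe⟩
        · rcases matched_in_stem s hsAlt w hwsup hwu with ⟨g, hg, hgM, hwg⟩ | rfl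
          · by_cases heg : e = g
            · exact heS (heg ▸ List.mem_toFinset.mpr hg)
            · exact hM.1.2 e heM g hgM heg w ⟨hwe, hwg⟩
          · exact hfM (hhead f (edge_at_start s hsPath hfs hwf))
      rcases Finset.mem_symmDiff.mp he with ⟨heM, heS⟩ | ⟨heS, heM⟩ <;>
        rcases Finset.mem_symmDiff.mp hf with ⟨hfM, hfS⟩ | ⟨hfS, hfM⟩
      · exact hM.1.2 e heM f hfM hef v ⟨hve, hvf⟩
      · exact key e f heM heS hfS hfM v hve hvf
      · exact key f e hfM hfS heS heM v hvf hve
      · rcases shared_vertex_matched s hsPath hsAlt e (List.mem_toFinset.mp heS) f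
          (List.mem_toFinset.mp hfS) hef v hve hvf with h | h
        · exact heM h
        · exact hfM h
  -- the blossom's edges are disjoint from the stem's edges
  have hdisj : ∀ e ∈ c.edges, e ∉ S := by
    intro e
    induction e with
    | _ x y =>
      intro hec heS
      have hes : s(x, y) ∈ s.edges := List.mem_toFinset.mp heS
      have hx : x = b := hshare x (s.fst_mem_support_of_mem_edges hes)
        (c.fst_mem_support_of_mem_edges hec)
      have hy : y = b := hshare y (s.snd_mem_support_of_mem_edges hes)
        (c.snd_mem_support_of_mem_edges hec)
      have hadj : G.Adj x y := (SimpleGraph.mem_edgeSet G).mp (c.edges_subset_edgeSet hec)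
      rw [hx, hy] at hadj
      exact G.loopless.irrefl b hadj
  have hagree : ∀ e ∈ c.edges, (e ∈ M ↔ e ∈ symmDiff M S) := by
    intro e he
    have := hdisj e he
    rw [Finset.mem_symmDiff]
    tauto
  refine ⟨⟨hmatch, fun N hN => le_of_le_of_eq (hM.2 N hN) hcard.symm⟩,
    fun e he _ => hb4 e he, ⟨hcCyc, hcOdd, ?_, ?_, ?_⟩, hb4⟩
  · exact chain'_alt_congr c.edges hagree hcAlt
  · have hEq : c.edges.toFinset ∩ symmDiff M S = c.edges.toFinset ∩ M := by
      ext g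
      simp only [Finset.mem_inter, List.mem_toFinset]
      constructor
      · rintro ⟨hg, hgM'⟩
        exact ⟨hg, (hagree g hg).mpr hgM'⟩
      · rintro ⟨hg, hgM⟩
        exact ⟨hg, (hagree g hg).mp hgM⟩
    rw [hEq]
    exact hcCount
  · intro e he hm
    exact hcBase e he ((hagree e he).mpr hm)
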